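/- There exists a constant C > 0 such that for all n ≥ 2 and all 1 ≤ k ≤ n, in the random permutation model on {1,…,n}: |E[W_k(n)] − k·log(k(n−k+1)) − n| ≤ C·(k + log n), where log is the natural logarithm. -/

import Mathlib

open Finset Filter Topology MeasureTheory

/-- `eventA σ j k`: in the random binary search tree built by inserting the keys
`(σ 0 : ℕ) + 1, (σ 1 : ℕ) + 1, …` (so that the keys are `{1, …, n}` and `σ` is the
insertion order), the node labelled `k` lies in the subtree rooted at the node
labelled `j`; equivalently (for `j ≠ k`), `j` occurs before all other elements of
`{min j k, …, max j k}` in the insertion order.  For `j = k` this is the sure event. -/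
def eventA {n : ℕ} (σ : Equiv.Perm (Fin n)) (j k : ℕ) : Prop :=
  ∀ jf mf : Fin n, (jf : ℕ) + 1 = j →
    min j k ≤ (mf : ℕ) + 1 → (mf : ℕ) + 1 ≤ max j k → (mf : ℕ) + 1 ≠ j →
      σ.symm jf < σ.symm mf

/-- `eventB σ j k`: the event `B_{j,k}`, i.e. `A_{j,k-1}` for `j < k`,
`A_{j,k+1}` for `j > k`, and the sure event for `j = k`. -/
def eventB {n : ℕ} (σ : Equiv.Perm (Fin n)) (j k : ℕ) : Prop :=
  if j < k then eventA σ j (k - 1) else if k < j then eventA σ j (k + 1) else True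

open Classical in
/-- probability of an event under the uniform distribution on permutations. -/
noncomputable def probPerm {n : ℕ} (E : Equiv.Perm (Fin n) → Prop) : ℝ :=
  ((Finset.univ.filter fun σ => E σ).card : ℝ) / (Fintype.card (Equiv.Perm (Fin n)) : ℝ)

/-- expectation of a random variable under the uniform distribution on permutations. -/
noncomputable def expPerm {n : ℕ} (X : Equiv.Perm (Fin n) → ℝ) : ℝ :=
  (∑ σ : Equiv.Perm (Fin n), X σ) / (Fintype.card (Equiv.Perm (Fin n)) : ℝ)

/-- variance of a random variable under the uniform distribution on permutations. -/
noncomputable def varPerm {n : ℕ} (X : Equiv.Perm (Fin n) → ℝ) : ℝ :=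
  expPerm fun σ => (X σ - expPerm X) ^ 2

open Classical in
/-- real-valued indicator of a proposition. -/
noncomputable def ind (P : Prop) : ℝ := if P then 1 else 0

/-- `depthD σ k = D_k(n)`, the depth of the node labelled `k`. -/
noncomputable def depthD {n : ℕ} (σ : Equiv.Perm (Fin n)) (k : ℕ) : ℝ :=
  (∑ j : Fin n, ind (eventA σ ((j : ℕ) + 1) k)) - 1

/-- `weightW σ k = W_k(n)`, the weighted depth of the node labelled `k`. -/
noncomputable def weightW {n : ℕ} (σ : Equiv.Perm (Fin n)) (k : ℕ) : ℝ :=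
  ∑ j : Fin n, ((j : ℕ) + 1 : ℝ) * ind (eventA σ ((j : ℕ) + 1) k)

/-- `barW σ k = \bar W_k(n) = Σ_{j=1}^n j · 1_{B_{j,k}}`. -/
noncomputable def barW {n : ℕ} (σ : Equiv.Perm (Fin n)) (k : ℕ) : ℝ :=
  ∑ j : Fin n, ((j : ℕ) + 1 : ℝ) * ind (eventB σ ((j : ℕ) + 1) k)

/-- first-order harmonic number `H^{(1)}_m = Σ_{j=1}^m 1/j`. -/
noncomputable def H1 (m : ℕ) : ℝ := ∑ j ∈ Finset.range m, (1 : ℝ) / (j + 1)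

/-- second-order harmonic number `H^{(2)}_m = Σ_{j=1}^m 1/j²`. -/
noncomputable def H2 (m : ℕ) : ℝ := ∑ j ∈ Finset.range m, (1 : ℝ) / (j + 1) ^ 2


open Classical in
private lemma filter_min_card_eq {n : ℕ} (S : Finset (Fin n)) {a b : Fin n}
    (ha : a ∈ S) (hb : b ∈ S) :
    (Finset.univ.filter fun σ : Equiv.Perm (Fin n) =>
        ∀ i ∈ S, i ≠ a → σ.symm a < σ.symm i).card =
    (Finset.univ.filter fun σ : Equiv.Perm (Fin n) =>
        ∀ i ∈ S, i ≠ b → σ.symm b < σ.symm i).card := by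
  have key : ∀ (x y : Fin n), x ∈ S → y ∈ S → ∀ σ : Equiv.Perm (Fin n),
      (∀ i ∈ S, i ≠ x → σ.symm x < σ.symm i) →
      ∀ i ∈ S, i ≠ y → (σ.trans (Equiv.swap x y)).symm y < (σ.trans (Equiv.swap x y)).symm i := by
    intro x y hx hy σ hσ i hi hiy
    have hsymm : ∀ z, (σ.trans (Equiv.swap x y)).symm z = σ.symm (Equiv.swap x y z) := by
      intro z; simp [Equiv.symm_trans_apply]
    rw [hsymm, hsymm, Equiv.swap_apply_right]
    rcases eq_or_ne i x with rfl | hix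
    · rw [Equiv.swap_apply_left]
      exact hσ y hy hiy.symm
    · rw [Equiv.swap_apply_of_ne_of_ne hix hiy]
      exact hσ i hi hix
  refine Finset.card_bij' (fun σ _ => σ.trans (Equiv.swap a b))
      (fun σ _ => σ.trans (Equiv.swap b a)) ?_ ?_ ?_ ?_
  · intro σ hσ
    simp only [Finset.mem_filter, Finset.mem_univ, true_and] at hσ ⊢
    exact key a b ha hb σ hσ
  · intro σ hσ
    simp only [Finset.mem_filter, Finset.mem_univ, true_and] at hσ ⊢
    exact key b a hb ha σ hσ
  · intro σ _
    ext z
    rw [Equiv.trans_apply, Equiv.trans_apply, Equiv.swap_comm b a, Equiv.swap_apply_self]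
  · intro σ _
    ext z
    rw [Equiv.trans_apply, Equiv.trans_apply, Equiv.swap_comm a b, Equiv.swap_apply_self]

private noncomputable def argminPerm {n : ℕ} (S : Finset (Fin n)) (hS : S.Nonempty)
    (σ : Equiv.Perm (Fin n)) : Fin n :=
  σ ((S.image σ.symm).min' (hS.image _))

open Classical in
private lemma sum_filter_min_card {n : ℕ} (S : Finset (Fin n)) (hS : S.Nonempty) :
    ∑ b ∈ S, (Finset.univ.filter fun σ : Equiv.Perm (Fin n) =>
        ∀ i ∈ S, i ≠ b → σ.symm b < σ.symm i).card
      = Fintype.card (Equiv.Perm (Fin n)) := by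
  have hgS : ∀ σ : Equiv.Perm (Fin n), argminPerm S hS σ ∈ S := by
    intro σ
    have h := (S.image σ.symm).min'_mem (hS.image σ.symm)
    rw [Finset.mem_image] at h
    obtain ⟨i, hi, hie⟩ := h
    unfold argminPerm
    rw [← hie]
    simpa using hi
  have hcard : (Finset.univ : Finset (Equiv.Perm (Fin n))).card
      = ∑ b ∈ S, (Finset.univ.filter fun σ => argminPerm S hS σ = b).card :=
    Finset.card_eq_sum_card_fiberwise fun σ _ => hgS σ
  rw [← Finset.card_univ, hcard]
  refine Finset.sum_congr rfl fun b hb => ?_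
  congr 1
  apply Finset.filter_congr
  intro σ _
  constructor
  · intro h
    have hle : ∀ x ∈ S.image σ.symm, σ.symm b ≤ x := by
      intro x hx
      rw [Finset.mem_image] at hx
      obtain ⟨i, hi, rfl⟩ := hx
      rcases eq_or_ne i b with rfl | hib
      · exact le_refl _
      · exact (h i hi hib).le
    have hmin : (S.image σ.symm).min' (hS.image σ.symm) = σ.symm b :=
      le_antisymm (Finset.min'_le _ _ (Finset.mem_image_of_mem _ hb))
        (Finset.le_min' _ _ _ hle)
    unfold argminPerm
    rw [hmin]
    simp
  · intro hgb i hi hib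
    have hmin : σ.symm b = (S.image σ.symm).min' (hS.image σ.symm) := by
      have h2 := congrArg σ.symm hgb
      unfold argminPerm at h2
      simpa using h2.symm
    have hle : σ.symm b ≤ σ.symm i := by
      rw [hmin]
      exact Finset.min'_le _ _ (Finset.mem_image_of_mem _ hi)
    exact lt_of_le_of_ne hle (fun h => hib (σ.symm.injective h).symm)

open Classical in
private lemma probPerm_forall_min {n : ℕ} (S : Finset (Fin n)) {a : Fin n} (ha : a ∈ S) :
    probPerm (fun σ : Equiv.Perm (Fin n) => ∀ i ∈ S, i ≠ a → σ.symm a < σ.symm i)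
      = 1 / (S.card : ℝ) := by
  have hmul : (Finset.univ.filter fun σ : Equiv.Perm (Fin n) =>
      ∀ i ∈ S, i ≠ a → σ.symm a < σ.symm i).card * S.card
      = Fintype.card (Equiv.Perm (Fin n)) := by
    rw [← sum_filter_min_card S ⟨a, ha⟩,
      Finset.sum_congr rfl (fun b hb => filter_min_card_eq S hb ha),
      Finset.sum_const, smul_eq_mul, mul_comm]
  have hN : (0:ℕ) < Fintype.card (Equiv.Perm (Fin n)) := Fintype.card_pos
  have hF : (Finset.univ.filter fun σ : Equiv.Perm (Fin n) =>
      ∀ i ∈ S, i ≠ a → σ.symm a < σ.symm i).card ≠ 0 := by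
    intro h0
    rw [h0] at hmul
    omega
  unfold probPerm
  beta_reduce
  set F := (Finset.univ.filter fun σ : Equiv.Perm (Fin n) =>
      ∀ i ∈ S, i ≠ a → σ.symm a < σ.symm i).card with hFdef
  rw [← hmul]
  push_cast
  rw [div_mul_eq_div_div]
  congr 1
  rw [div_eq_one_iff_eq (Nat.cast_ne_zero.mpr hF)]
  norm_cast

private lemma probPerm_eventA {n j k : ℕ} (hj1 : 1 ≤ j) (hjn : j ≤ n)
    (hk1 : 1 ≤ k) (hkn : k ≤ n) :
    probPerm (fun σ : Equiv.Perm (Fin n) => eventA σ j k)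
      = 1 / (((max j k - min j k : ℕ) : ℝ) + 1) := by
  classical
  set S : Finset (Fin n) := Finset.univ.filter
    (fun m : Fin n => min j k ≤ (m:ℕ)+1 ∧ (m:ℕ)+1 ≤ max j k) with hSdef
  have hjlt : j - 1 < n := by omega
  set a : Fin n := ⟨j-1, hjlt⟩ with hadef
  have haval : (a:ℕ) = j - 1 := rfl
  have hmemS : ∀ m : Fin n, m ∈ S ↔ (min j k ≤ (m:ℕ)+1 ∧ (m:ℕ)+1 ≤ max j k) := by
    intro m
    simp [hSdef]
  have haS : a ∈ S := by
    rw [hmemS]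
    rw [haval]
    omega
  have hiff : ∀ σ : Equiv.Perm (Fin n), eventA σ j k ↔
      ∀ i ∈ S, i ≠ a → σ.symm a < σ.symm i := by
    intro σ
    constructor
    · intro h i hi hia
      rw [hmemS] at hi
      refine h a i (by rw [haval]; omega) hi.1 hi.2 ?_
      intro hcon
      exact hia (Fin.ext (by omega))
    · intro h jf mf hjf h1 h2 h3
      have hjfa : jf = a := Fin.ext (by rw [haval]; omega)
      have hmf : mf ∈ S := (hmemS mf).mpr ⟨h1, h2⟩
      have hne : mf ≠ a := by
        intro hc
        apply h3
        rw [hc, haval]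
        omega
      rw [hjfa]
      exact h mf hmf hne
  have hcard : S.card = max j k - min j k + 1 := by
    have h1 : S.card = (Finset.Icc (min j k) (max j k)).card := by
      apply Finset.card_bij (fun (m : Fin n) (_ : m ∈ S) => (m:ℕ)+1)
      · intro m hm
        rw [hmemS] at hm
        rw [Finset.mem_Icc]
        exact hm
      · intro m1 h1 m2 h2 he
        exact Fin.ext (by omega)
      · intro x hx
        rw [Finset.mem_Icc] at hx
        have hx1 : 1 ≤ x := by omega
        have hxn : x - 1 < n := by omega
        refine ⟨⟨x-1, hxn⟩, ?_, by simp; omega⟩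
        rw [hmemS]
        simp
        omega
    rw [h1, Nat.card_Icc]
    omega
  have hpp : probPerm (fun σ : Equiv.Perm (Fin n) => eventA σ j k)
      = probPerm (fun σ : Equiv.Perm (Fin n) => ∀ i ∈ S, i ≠ a → σ.symm a < σ.symm i) := by
    exact congrArg probPerm (funext fun σ => propext (hiff σ))
  rw [hpp, probPerm_forall_min S haS, hcard]
  push_cast
  ring_nf

private lemma expPerm_weightW_prob {n : ℕ} (k : ℕ) :
    expPerm (fun σ : Equiv.Perm (Fin n) => weightW σ k)
      = ∑ j : Fin n, ((j:ℕ)+1 : ℝ) *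
          probPerm (fun σ : Equiv.Perm (Fin n) => eventA σ ((j:ℕ)+1) k) := by
  unfold expPerm weightW probPerm
  rw [Finset.sum_comm, Finset.sum_div]
  refine Finset.sum_congr rfl fun j _ => ?_
  rw [← Finset.mul_sum, mul_div_assoc]
  congr 2
  unfold ind
  rw [Finset.sum_boole]

private lemma H1_shift (m : ℕ) :
    ∑ i ∈ Finset.range m, (1:ℝ)/((i:ℝ)+2) = H1 (m+1) - 1 := by
  have h := Finset.sum_range_succ' (fun i : ℕ => (1:ℝ)/((i:ℝ)+1)) m
  unfold H1
  rw [h]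
  push_cast
  norm_num
  exact Finset.sum_congr rfl fun i _ => by ring

private lemma part1 (k : ℕ) :
    ∑ j ∈ Finset.range k, ((j:ℝ)+1) * (1/(((k - (j+1) : ℕ) : ℝ) + 1))
      = ((k:ℝ)+1) * H1 k - k := by
  rw [← Finset.sum_range_reflect]
  have hterm : ∀ j ∈ Finset.range k,
      (((k-1-j:ℕ):ℝ)+1) * (1/(((k - (k-1-j+1) : ℕ) : ℝ) + 1))
      = ((k:ℝ)+1) * (1/((j:ℝ)+1)) - 1 := by
    intro j hj
    rw [Finset.mem_range] at hj
    have h1 : (k - (k-1-j+1) : ℕ) = j := by omega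
    have h2 : ((k-1-j : ℕ) : ℝ) = (k:ℝ) - ((j:ℝ)+1) := by
      have h3 : (k-1-j : ℕ) = k - (j+1) := by omega
      rw [h3, Nat.cast_sub (by omega)]
      push_cast
      ring
    rw [h1, h2]
    have hj0 : ((j:ℝ)+1) ≠ 0 := by positivity
    field_simp
    ring
  rw [Finset.sum_congr rfl hterm, Finset.sum_sub_distrib, ← Finset.mul_sum]
  unfold H1
  simp [Finset.sum_const]

private lemma part2 {n k : ℕ} (hk : 1 ≤ k) (hkn : k ≤ n) :
    ∑ j ∈ Finset.Ico k n, ((j:ℝ)+1) * (1/(((j + 1 - k : ℕ):ℝ)+1))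
      = ((k:ℝ)-1) * (H1 (n-k+1) - 1) + ((n:ℝ) - (k:ℝ)) := by
  rw [Finset.sum_Ico_eq_sum_range]
  have hterm : ∀ i ∈ Finset.range (n-k),
      (((k+i:ℕ):ℝ)+1) * (1/(((k + i + 1 - k : ℕ):ℝ)+1))
      = ((k:ℝ)-1) * (1/((i:ℝ)+2)) + 1 := by
    intro i _
    have h1 : (k + i + 1 - k : ℕ) = i + 1 := by omega
    rw [h1]
    push_cast
    have hi0 : ((i:ℝ)+1+1) ≠ 0 := by positivity
    field_simp
    ring
  rw [Finset.sum_congr rfl hterm, Finset.sum_add_distrib, ← Finset.mul_sum, H1_shift]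
  rw [Finset.sum_const, Finset.card_range]
  have : ((n - k : ℕ) : ℝ) = (n:ℝ) - (k:ℝ) := by
    rw [Nat.cast_sub hkn]
  rw [nsmul_eq_mul, this, mul_one]

private lemma expPerm_weightW_eq {n k : ℕ} (hk1 : 1 ≤ k) (hkn : k ≤ n) :
    expPerm (fun σ : Equiv.Perm (Fin n) => weightW σ k)
      = ((k:ℝ)+1) * H1 k + ((k:ℝ)-1) * H1 (n-k+1) + (n:ℝ) - 3*(k:ℝ) + 1 := by
  rw [expPerm_weightW_prob]
  rw [Fin.sum_univ_eq_sum_range (fun j : ℕ =>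
    ((j:ℝ)+1) * probPerm (fun σ : Equiv.Perm (Fin n) => eventA σ (j+1) k))]
  have hstep : ∀ j ∈ Finset.range n,
      ((j:ℝ)+1) * probPerm (fun σ : Equiv.Perm (Fin n) => eventA σ (j+1) k)
      = ((j:ℝ)+1) * (1/(((max (j+1) k - min (j+1) k : ℕ):ℝ)+1)) := by
    intro j hj
    rw [Finset.mem_range] at hj
    rw [probPerm_eventA (by omega) (by omega) hk1 hkn]
  rw [Finset.sum_congr rfl hstep]
  rw [← Finset.sum_range_add_sum_Ico _ hkn]
  have e1 : ∀ j ∈ Finset.range k,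
      ((j:ℝ)+1) * (1/(((max (j+1) k - min (j+1) k : ℕ):ℝ)+1))
      = ((j:ℝ)+1) * (1/(((k - (j+1) : ℕ) : ℝ) + 1)) := by
    intro j hj
    rw [Finset.mem_range] at hj
    have h : (max (j+1) k - min (j+1) k : ℕ) = k - (j+1) := by omega
    rw [h]
  have e2 : ∀ j ∈ Finset.Ico k n,
      ((j:ℝ)+1) * (1/(((max (j+1) k - min (j+1) k : ℕ):ℝ)+1))
      = ((j:ℝ)+1) * (1/(((j + 1 - k : ℕ):ℝ)+1)) := by
    intro j hj
    rw [Finset.mem_Ico] at hj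
    have h : (max (j+1) k - min (j+1) k : ℕ) = j + 1 - k := by omega
    rw [h]
  rw [Finset.sum_congr rfl e1, Finset.sum_congr rfl e2, part1, part2 hk1 hkn]
  ring

private lemma H1_eq_harmonic (m : ℕ) : H1 m = ((harmonic m : ℚ) : ℝ) := by
  unfold H1 harmonic
  push_cast
  simp [one_div]

private lemma H1_bounds {m : ℕ} (hm : 1 ≤ m) :
    Real.log m ≤ H1 m ∧ H1 m ≤ 1 + Real.log m := by
  rw [H1_eq_harmonic]
  constructor
  · calc Real.log m ≤ Real.log ((m:ℝ)+1) :=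
          Real.log_le_log (by positivity) (by linarith)
      _ ≤ ((harmonic m : ℚ) : ℝ) := by
          have := log_add_one_le_harmonic m
          push_cast at this ⊢
          linarith
  · exact harmonic_le_one_add_log m

/-- There exists `C > 0` such that for all `n ≥ 2` and all `1 ≤ k ≤ n`,
`|E[W_k(n)] − k·log(k(n−k+1)) − n| ≤ C·(k + log n)`. -/
theorem expectation_weightW_expansion :
    ∃ C : ℝ, 0 < C ∧ ∀ n : ℕ, 2 ≤ n → ∀ k : ℕ, 1 ≤ k → k ≤ n →
      |expPerm (fun σ : Equiv.Perm (Fin n) => weightW σ k)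
          - (k : ℝ) * Real.log ((k : ℝ) * ((n : ℝ) - (k : ℝ) + 1)) - (n : ℝ)|
        ≤ C * ((k : ℝ) + Real.log n) := by

  refine ⟨8, by norm_num, ?_⟩
  intro n hn k hk1 hkn
  have hkR : (1:ℝ) ≤ (k:ℝ) := by exact_mod_cast hk1
  have hnR : (2:ℝ) ≤ (n:ℝ) := by exact_mod_cast hn
  set m := n - k + 1 with hm
  have hm1 : 1 ≤ m := by omega
  have hmn : m ≤ n := by omega
  have hcast : ((n:ℝ) - (k:ℝ) + 1) = ((m:ℕ):ℝ) := by
    rw [hm]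
    push_cast [Nat.cast_sub hkn]
    ring
  rw [expPerm_weightW_eq hk1 hkn, hcast,
    Real.log_mul (by positivity) (by positivity : ((m:ℕ):ℝ) ≠ 0)]
  obtain ⟨ha1, ha2⟩ := H1_bounds hk1
  obtain ⟨hb1, hb2⟩ := H1_bounds hm1
  have hlk0 : 0 ≤ Real.log k := Real.log_nonneg hkR
  have hlm0 : 0 ≤ Real.log m := Real.log_nonneg (by exact_mod_cast hm1)
  have hlkn : Real.log k ≤ Real.log n :=
    Real.log_le_log (by positivity) (by exact_mod_cast hkn)
  have hlmn : Real.log m ≤ Real.log n :=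
    Real.log_le_log (by positivity) (by exact_mod_cast hmn)
  have hln0 : 0 ≤ Real.log n := le_trans hlk0 hlkn
  have hp1 : ((k:ℝ)+1) * (H1 k - (1 + Real.log k)) ≤ 0 :=
    mul_nonpos_of_nonneg_of_nonpos (by linarith) (by linarith)
  have hp2 : ((k:ℝ)-1) * (H1 m - (1 + Real.log m)) ≤ 0 :=
    mul_nonpos_of_nonneg_of_nonpos (by linarith) (by linarith)
  have hp3 : 0 ≤ ((k:ℝ)+1) * (H1 k - Real.log k) :=
    mul_nonneg (by linarith) (by linarith)
  have hp4 : 0 ≤ ((k:ℝ)-1) * (H1 m - Real.log m) :=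
    mul_nonneg (by linarith) (by linarith)
  rw [abs_le]
  constructor
  · nlinarith [hp3, hp4]
  · nlinarith [hp1, hp2]
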